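/- Let n, r ∈ ℕ with 2^r ≤ n, let d > 1 with d/2^r < 1, let α > 2, and set χ_opt = 1/2^r. Define weights g_i = (1 + (α·d·χ_opt)/(1 − d·χ_opt)^{2^r − 1})^{2^r − i} for i ∈ {1,…,2^r} and the potential g(x) = Σ_{i=1}^{2^r} g_i·(1 − x_i) for x ∈ {0,1}^n. Then for every mutation rate χ with 0 < χ ≤ d·χ_opt and every current point x ∈ {0,1}^n, one step of the (1+1) EA with mutation rate χ on BinVal satisfies E[g(x) − g(x')] ≥ χ·(1 − χ)^{2^r − 1}·(1 − 1/α)·g(x), where x' is the next point and the expectation is over the random mutation. -/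

import Mathlib

open scoped BigOperators

noncomputable section

/-- `BinVal` on bit strings of length `n`: index `0` (bit number `1`) is the most
significant bit, with weight `2 ^ (n - 1 - i)`. -/
def binVal (n : ℕ) (x : Fin n → Bool) : ℕ :=
  ∑ i : Fin n, if x i then 2 ^ (n - 1 - (i : ℕ)) else 0

/-- Probability that standard bit mutation with rate `χ` turns `x` into `y`:
each bit flips independently with probability `χ`. -/
def flipProb (n : ℕ) (χ : ℝ) (x y : Fin n → Bool) : ℝ :=
  ∏ i : Fin n, if x i = y i then 1 - χ else χ

/-- Elitist selection of the (1+1) EA on BinVal: the offspring `y` replaces `x`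
iff `BinVal y ≥ BinVal x`. -/
def select (n : ℕ) (x y : Fin n → Bool) : Fin n → Bool :=
  if binVal n x ≤ binVal n y then y else x

open Finset

def finFind {n : ℕ} (p : Fin n → Prop) [DecidablePred p] : Option (Fin n) :=
  Fin.find? (fun k => decide (p k))

lemma finFind_eq_some_iff {n : ℕ} {p : Fin n → Prop} [DecidablePred p] {i : Fin n} :
    finFind p = some i ↔ p i ∧ ∀ j, p j → i ≤ j := by
  simp only [finFind, Fin.find?_eq_some_iff, decide_eq_true_eq, decide_eq_false_iff_not]
  constructor
  · rintro ⟨h1, h2⟩; exact ⟨h1, fun j hj => not_lt.mp fun hlt => h2 j hlt hj⟩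
  · rintro ⟨h1, h2⟩; exact ⟨h1, fun j hlt hj => absurd (h2 j hj) (not_le.mpr hlt)⟩

lemma finFind_eq_none_iff {n : ℕ} {p : Fin n → Prop} [DecidablePred p] :
    finFind p = none ↔ ∀ i, ¬ p i := by
  simp only [finFind, Fin.find?_eq_none_iff, decide_eq_false_iff_not]

lemma sum_prod_bool_eq {n : ℕ} (F : Fin n → Bool → ℝ) :
    ∑ y : Fin n → Bool, ∏ i, F i (y i) = ∏ i, (F i false + F i true) := by
  classical
  have := Finset.prod_univ_sum (fun _ : Fin n => (Finset.univ : Finset Bool)) (fun i b => F i b)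
  rw [Fintype.piFinset_univ] at this
  rw [← this]
  refine Finset.prod_congr rfl fun i _ => ?_
  simp [Fintype.sum_bool, add_comm]

lemma prod_split_at {M : Type*} [CommMonoid M] {n : ℕ} (j : Fin n) (f : Fin n → M) :
    ∏ i, f i = (∏ i ∈ Finset.Iio j, f i) * f j * ∏ i ∈ Finset.Ioi j, f i := by
  classical
  have h1 : (Finset.Iio j) ∪ ({j} ∪ (Finset.Ioi j)) = Finset.univ := by
    ext i; simp; omega
  have hd1 : Disjoint ({j} : Finset (Fin n)) (Finset.Ioi j) := by
    simp [Finset.disjoint_left]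
  have hd2 : Disjoint (Finset.Iio j) ({j} ∪ (Finset.Ioi j)) := by
    rw [Finset.disjoint_left]
    intro a ha hb
    simp only [Finset.mem_Iio] at ha
    simp only [Finset.mem_union, Finset.mem_singleton, Finset.mem_Ioi] at hb
    rcases hb with rfl | hb
    · exact absurd ha (lt_irrefl a)
    · exact absurd (lt_trans ha hb) (lt_irrefl a)
  rw [← h1, Finset.prod_union hd2, Finset.prod_union hd1, Finset.prod_singleton, mul_assoc]

/-- Marginalisation over the fiber "first differing coordinate is `j`". -/
lemma sum_fiber_prod {n : ℕ} (x : Fin n → Bool) (j : Fin n) (F : Fin n → Bool → ℝ) :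
    ∑ y ∈ Finset.univ.filter
        (fun y : Fin n → Bool => finFind (fun i => y i ≠ x i) = some j), ∏ i, F i (y i)
      = (∏ i ∈ Finset.Iio j, F i (x i)) * F j (!(x j)) *
          ∏ i ∈ Finset.Ioi j, (F i false + F i true) := by
  classical
  set F' : Fin n → Bool → ℝ := fun i b =>
    F i b * (if i < j then (if b = x i then 1 else 0)
      else if i = j then (if b = x i then 0 else 1) else 1) with hF'
  have step1 : ∑ y ∈ Finset.univ.filter
      (fun y : Fin n → Bool => finFind (fun i => y i ≠ x i) = some j), ∏ i, F i (y i)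
      = ∑ y : Fin n → Bool, ∏ i, F' i (y i) := by
    rw [Finset.sum_filter]
    refine Finset.sum_congr rfl fun y _ => ?_
    by_cases hy : finFind (fun i => y i ≠ x i) = some j
    · rw [if_pos hy]
      rw [finFind_eq_some_iff] at hy
      obtain ⟨hyj, hmin⟩ := hy
      refine Finset.prod_congr rfl fun i _ => ?_
      rw [hF']
      by_cases h1 : i < j
      · have hyi : y i = x i := by
          by_contra h
          exact absurd (hmin i h) (not_le.mpr h1)
        simp [h1, hyi]
      · by_cases h2 : i = j
        · subst h2
          simp [h1, hyj]
        · simp [h1, h2]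
    · rw [if_neg hy]
      rw [finFind_eq_some_iff] at hy
      push_neg at hy
      by_cases hpj : y j ≠ x j
      · obtain ⟨i, hpi, hij⟩ := hy hpj
        refine (Finset.prod_eq_zero (Finset.mem_univ i) ?_).symm
        rw [hF']
        have h1 : i < j := hij
        simp [h1, hpi]
      · refine (Finset.prod_eq_zero (Finset.mem_univ j) ?_).symm
        rw [hF']
        rw [not_not] at hpj
        simp [hpj]
  rw [step1, sum_prod_bool_eq, prod_split_at j]
  congr 1
  · congr 1
    · refine Finset.prod_congr rfl fun i hi => ?_
      have h1 : i < j := Finset.mem_Iio.mp hi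
      rw [hF']
      cases hxi : x i <;> simp [h1, hxi]
    · rw [hF']
      cases hxj : x j <;> simp [hxj]
  · refine Finset.prod_congr rfl fun i hi => ?_
    have h1 : j < i := Finset.mem_Ioi.mp hi
    have h2 : ¬ i < j := by omega
    have h3 : i ≠ j := by omega
    rw [hF']
    simp [h2, h3]

lemma sum_split_at {M : Type*} [AddCommMonoid M] {n : ℕ} (j : Fin n) (f : Fin n → M) :
    ∑ i, f i = (∑ i ∈ Finset.Iio j, f i) + f j + ∑ i ∈ Finset.Ioi j, f i := by
  classical
  have h1 : (Finset.Iio j) ∪ ({j} ∪ (Finset.Ioi j)) = Finset.univ := by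
    ext i; simp; omega
  have hd1 : Disjoint ({j} : Finset (Fin n)) (Finset.Ioi j) := by
    simp [Finset.disjoint_left]
  have hd2 : Disjoint (Finset.Iio j) ({j} ∪ (Finset.Ioi j)) := by
    rw [Finset.disjoint_left]
    intro a ha hb
    simp only [Finset.mem_Iio] at ha
    simp only [Finset.mem_union, Finset.mem_singleton, Finset.mem_Ioi] at hb
    rcases hb with rfl | hb
    · exact absurd ha (lt_irrefl a)
    · exact absurd (lt_trans ha hb) (lt_irrefl a)
  rw [← h1, Finset.sum_union hd2, Finset.sum_union hd1, Finset.sum_singleton, add_assoc]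

lemma sum_two_pow_range (k : ℕ) : ∑ e ∈ Finset.range k, 2 ^ e = 2 ^ k - 1 := by
  induction k with
  | zero => simp
  | succ k ih => rw [Finset.sum_range_succ, ih]; have := Nat.one_le_two_pow (n := k); omega

lemma binVal_tail_lt {n : ℕ} (z : Fin n → Bool) (j : Fin n) :
    ∑ i ∈ Finset.Ioi j, (if z i then 2 ^ (n - 1 - (i : ℕ)) else 0) < 2 ^ (n - 1 - (j : ℕ)) := by
  classical
  have h1 : ∑ i ∈ Finset.Ioi j, (if z i then 2 ^ (n - 1 - (i : ℕ)) else 0)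
      ≤ ∑ i ∈ Finset.Ioi j, 2 ^ (n - 1 - (i : ℕ)) := by
    refine Finset.sum_le_sum fun i _ => ?_
    split <;> simp
  have h2 : ∑ i ∈ Finset.Ioi j, 2 ^ (n - 1 - (i : ℕ))
      = ∑ e ∈ (Finset.Ioi j).image (fun i : Fin n => n - 1 - (i : ℕ)), 2 ^ e := by
    rw [Finset.sum_image]
    intro a ha b hb hab
    have ha' : (a : ℕ) < n := a.isLt
    have hb' : (b : ℕ) < n := b.isLt
    have : (a : ℕ) = (b : ℕ) := by simp only at hab; omega
    exact Fin.ext this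
  have h3 : (Finset.Ioi j).image (fun i : Fin n => n - 1 - (i : ℕ)) ⊆
      Finset.range (n - 1 - (j : ℕ)) := by
    intro e he
    simp only [Finset.mem_image, Finset.mem_Ioi] at he
    obtain ⟨i, hi, rfl⟩ := he
    have : (j : ℕ) < (i : ℕ) := hi
    have hi' : (i : ℕ) < n := i.isLt
    simp only [Finset.mem_range]
    omega
  have h4 : ∑ e ∈ (Finset.Ioi j).image (fun i : Fin n => n - 1 - (i : ℕ)), 2 ^ e
      ≤ ∑ e ∈ Finset.range (n - 1 - (j : ℕ)), 2 ^ e :=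
    Finset.sum_le_sum_of_subset h3
  have h5 := sum_two_pow_range (n - 1 - (j : ℕ))
  have h6 : 1 ≤ 2 ^ (n - 1 - (j : ℕ)) := Nat.one_le_two_pow
  omega

lemma binVal_lt_of_flip {n : ℕ} (x y : Fin n → Bool) (j : Fin n)
    (hlow : ∀ k, k < j → y k = x k) (hxj : x j = false) (hyj : y j = true) :
    binVal n x < binVal n y := by
  classical
  have hx := sum_split_at j (fun i => if x i then 2 ^ (n - 1 - (i : ℕ)) else 0)
  have hy := sum_split_at j (fun i => if y i then 2 ^ (n - 1 - (i : ℕ)) else 0)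
  unfold binVal
  rw [hx, hy]
  have hIio : ∑ i ∈ Finset.Iio j, (if x i then 2 ^ (n - 1 - (i : ℕ)) else 0)
      = ∑ i ∈ Finset.Iio j, (if y i then 2 ^ (n - 1 - (i : ℕ)) else 0) := by
    refine Finset.sum_congr rfl fun i hi => ?_
    rw [hlow i (Finset.mem_Iio.mp hi)]
  rw [hIio]
  simp only [hxj, hyj, if_true, Bool.false_eq_true, if_false]
  have := binVal_tail_lt x j
  omega

lemma core_drift {n m : ℕ} (x : Fin n → Bool)
    (χ : ℝ) (hχ0 : 0 < χ) (hχ1 : χ < 1)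
    (G : ℕ → ℝ) (hGpos : ∀ k, 0 < G k)
    (β : ℝ) (hβ1 : β ≤ 1)
    (g : (Fin n → Bool) → ℝ)
    (hg : ∀ z, g z = ∑ i ∈ Finset.univ.filter (fun i : Fin n => (i : ℕ) < m),
        G (i : ℕ) * (if z i then (0:ℝ) else 1))
    (hGsum : ∀ j : Fin n, (j : ℕ) < m →
        χ * (∑ k ∈ Finset.univ.filter (fun k : Fin n => (k : ℕ) < m ∧ j < k), G (k : ℕ))
          ≤ β * G (j : ℕ)) :
    χ * (1 - χ) ^ (m - 1) * (1 - β) * g x ≤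
      ∑ y : Fin n → Bool, flipProb n χ x y * (g x - g (select n x y)) := by
  classical
  have h1χ0 : (0:ℝ) < 1 - χ := by linarith
  have hfib := Finset.sum_fiberwise (Finset.univ)
    (fun y : Fin n → Bool => finFind (fun i => y i ≠ x i))
    (fun y => flipProb n χ x y * (g x - g (select n x y)))
  rw [← hfib, Fintype.sum_option]
  have hnone : ∑ y ∈ Finset.univ.filter
      (fun y : Fin n → Bool => finFind (fun i => y i ≠ x i) = none),
      flipProb n χ x y * (g x - g (select n x y)) = 0 := by
    refine Finset.sum_eq_zero fun y hy => ?_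
    simp only [Finset.mem_filter] at hy
    have hyx : y = x := by
      funext i
      have := finFind_eq_none_iff.mp hy.2 i
      simpa using this
    subst hyx
    have hsel : select n y y = y := by unfold select; rw [if_pos le_rfl]
    rw [hsel, sub_self, mul_zero]
  rw [hnone, zero_add]
  -- per-fiber lower bounds
  have hmain : ∀ j : Fin n,
      (if ((j:ℕ) < m ∧ x j = false) then χ * (1-χ)^(m-1) * (1-β) * G (j:ℕ) else 0)
      ≤ ∑ y ∈ Finset.univ.filter
          (fun y : Fin n → Bool => finFind (fun i => y i ≠ x i) = some j),
          flipProb n χ x y * (g x - g (select n x y)) := by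

    intro j
    by_cases hxj : x j = true
    · have h0 : (∑ y ∈ Finset.univ.filter
          (fun y : Fin n → Bool => finFind (fun i => y i ≠ x i) = some j),
          flipProb n χ x y * (g x - g (select n x y))) = 0 := by
        refine Finset.sum_eq_zero fun y hy => ?_
        simp only [Finset.mem_filter] at hy
        rw [finFind_eq_some_iff] at hy
        obtain ⟨-, hyj, hmin⟩ := hy
        have hyj' : y j = false := by
          revert hyj; rw [hxj]; cases y j <;> simp
        have hlow : ∀ k, k < j → x k = y k := by
          intro k hk
          by_contra hne
          exact absurd (hmin k (Ne.symm hne)) (not_le.mpr hk)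
        have hlt : binVal n y < binVal n x := binVal_lt_of_flip y x j hlow hyj' hxj
        have hsel : select n x y = x := by unfold select; rw [if_neg (not_le.mpr hlt)]
        rw [hsel, sub_self, mul_zero]
      rw [h0, if_neg (by simp [hxj])]
    · have hxj' : x j = false := by simpa using hxj
      have hsel : ∀ y ∈ Finset.univ.filter
          (fun y : Fin n → Bool => finFind (fun i => y i ≠ x i) = some j),
          select n x y = y ∧ (∀ k, k < j → y k = x k) := by
        intro y hy
        simp only [Finset.mem_filter] at hy
        rw [finFind_eq_some_iff] at hy
        obtain ⟨-, hyj, hmin⟩ := hy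
        have hlow : ∀ k, k < j → y k = x k := by
          intro k hk; by_contra hne
          exact absurd (hmin k hne) (not_le.mpr hk)
        have hyj2 : y j = true := by revert hyj; rw [hxj']; cases y j <;> simp
        have hlt := binVal_lt_of_flip x y j hlow hxj' hyj2
        exact ⟨by unfold select; rw [if_pos hlt.le], hlow⟩
      by_cases hjm : (j:ℕ) < m
      swap
      · have hmj : m ≤ (j:ℕ) := not_lt.mp hjm
        have h0 : (∑ y ∈ Finset.univ.filter
            (fun y : Fin n → Bool => finFind (fun i => y i ≠ x i) = some j),
            flipProb n χ x y * (g x - g (select n x y))) = 0 := by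
          refine Finset.sum_eq_zero fun y hy => ?_
          obtain ⟨hs, hlow⟩ := hsel y hy
          rw [hs]
          have hgy : g y = g x := by
            rw [hg, hg]
            refine Finset.sum_congr rfl fun i hi => ?_
            simp only [Finset.mem_filter] at hi
            have hij : i < j := by
              rw [Fin.lt_def]; have := hi.2; omega
            rw [hlow i hij]
          rw [hgy, sub_self, mul_zero]
        rw [h0, if_neg (fun h => hjm h.1)]
      · rw [if_pos ⟨hjm, hxj'⟩]
        set fib := Finset.univ.filter
          (fun y : Fin n → Bool => finFind (fun i => y i ≠ x i) = some j) with hfibdef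
        set Ifun : Fin n → ℝ := fun k => ∑ y ∈ fib, flipProb n χ x y *
          ((if x k then (0:ℝ) else 1) - (if y k then (0:ℝ) else 1)) with hIfun
        have hstep1 : ∑ y ∈ fib, flipProb n χ x y * (g x - g (select n x y))
            = ∑ k ∈ Finset.univ.filter (fun k : Fin n => (k:ℕ) < m),
                G (k:ℕ) * Ifun k := by
          have h1 : ∀ y ∈ fib, flipProb n χ x y * (g x - g (select n x y))
              = ∑ k ∈ Finset.univ.filter (fun k : Fin n => (k:ℕ) < m),
                  G (k:ℕ) * (flipProb n χ x y *
                    ((if x k then (0:ℝ) else 1) - (if y k then (0:ℝ) else 1))) := by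
            intro y hy
            rw [(hsel y hy).1, hg x, hg y, ← Finset.sum_sub_distrib, Finset.mul_sum]
            refine Finset.sum_congr rfl fun k _ => ?_
            ring
          rw [Finset.sum_congr rfl h1, Finset.sum_comm]
          simp only [hIfun]
          refine Finset.sum_congr rfl fun k _ => ?_
          rw [Finset.mul_sum]
        rw [hstep1]
        set F : Fin n → Fin n → Bool → ℝ := fun k i b =>
          (if x i = b then 1-χ else χ) *
            (if i = k then ((if x k then (0:ℝ) else 1) - (if b then (0:ℝ) else 1)) else 1)
          with hF
        have hIk : ∀ k : Fin n,
            Ifun k = (∏ i ∈ Finset.Iio j, F k i (x i)) * F k j true *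
                ∏ i ∈ Finset.Ioi j, (F k i false + F k i true) := by
          intro k
          have h2 : ∀ y : Fin n → Bool, flipProb n χ x y *
              ((if x k then (0:ℝ) else 1) - (if y k then (0:ℝ) else 1))
              = ∏ i, F k i (y i) := by
            intro y
            simp only [hF]
            rw [Finset.prod_mul_distrib]
            congr 1
            rw [Finset.prod_ite_eq' Finset.univ k
              (fun i => (if x k then (0:ℝ) else 1) - (if y i then (0:ℝ) else 1))]
            simp
          have h3 := sum_fiber_prod x j (F k)
          rw [hxj', Bool.not_false] at h3
          simp only [hIfun]
          rw [Finset.sum_congr rfl (fun y _ => h2 y), hfibdef]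
          exact h3
        have hprodIio : ∀ k : Fin n, j ≤ k →
            (∏ i ∈ Finset.Iio j, F k i (x i)) = (1-χ)^(j:ℕ) := by
          intro k hk
          have hconst : ∀ i ∈ Finset.Iio j, F k i (x i) = 1-χ := by
            intro i hi
            have h1 : i < j := Finset.mem_Iio.mp hi
            have h2 : i ≠ k := ne_of_lt (lt_of_lt_of_le h1 hk)
            simp only [hF]
            simp [h2]
          rw [Finset.prod_congr rfl hconst, Finset.prod_const, Fin.card_Iio]
        have hFj : ∀ k : Fin n, F k j true = χ := by
          intro k
          simp only [hF]
          by_cases h : j = k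
          · subst h; simp [hxj']
          · simp [hxj', h]
        have hIoi1 : ∀ (k i : Fin n), i ≠ k → (F k i false + F k i true) = 1 := by
          intro k i hik
          simp only [hF]
          cases h : x i <;> simp [hik, h] <;> ring
        have hIoik : ∀ k : Fin n,
            -χ ≤ F k k false + F k k true ∧ F k k false + F k k true ≤ χ := by
          intro k
          simp only [hF]
          cases h : x k <;> simp [h] <;> linarith
        have hIlt : ∀ k : Fin n, k < j → Ifun k = 0 := by
          intro k hk
          rw [hIk k]
          have hz : F k k (x k) = 0 := by
            simp only [hF]
            cases h : x k <;> simp [h]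
          rw [Finset.prod_eq_zero (Finset.mem_Iio.mpr hk) hz, zero_mul, zero_mul]
        have hIeq : Ifun j = (1-χ)^(j:ℕ) * χ := by
          rw [hIk j, hprodIio j le_rfl, hFj]
          have h1 : ∏ i ∈ Finset.Ioi j, (F j i false + F j i true) = 1 :=
            Finset.prod_eq_one fun i hi => hIoi1 j i (ne_of_gt (Finset.mem_Ioi.mp hi))
          rw [h1, mul_one]
        have hIgt : ∀ k : Fin n, j < k →
            Ifun k = (1-χ)^(j:ℕ) * χ * (F k k false + F k k true) := by
          intro k hk
          rw [hIk k, hprodIio k hk.le, hFj,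
            Finset.prod_eq_single_of_mem k (Finset.mem_Ioi.mpr hk)
              (fun i _ hik => hIoi1 k i hik)]
        -- assemble
        have hjT : j ∈ Finset.univ.filter (fun k : Fin n => (k:ℕ) < m) :=
          Finset.mem_filter.mpr ⟨Finset.mem_univ j, hjm⟩
        rw [← Finset.add_sum_erase _ (fun k : Fin n => G (k:ℕ) * Ifun k) hjT]
        have hpow : (0:ℝ) < (1-χ)^(j:ℕ) := pow_pos h1χ0 _
        have herase : -(χ * χ * (1-χ)^(j:ℕ)) *
            (∑ k ∈ Finset.univ.filter (fun k : Fin n => (k:ℕ) < m ∧ j < k), G (k:ℕ))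
            ≤ ∑ k ∈ (Finset.univ.filter (fun k : Fin n => (k:ℕ) < m)).erase j,
                G (k:ℕ) * Ifun k := by
          have h2 : ∀ k ∈ (Finset.univ.filter (fun k : Fin n => (k:ℕ) < m)).erase j,
              (if j < k then -(χ * χ * (1-χ)^(j:ℕ) * G (k:ℕ)) else 0) ≤ G (k:ℕ) * Ifun k := by
            intro k hk
            have hkj : k ≠ j := (Finset.mem_erase.mp hk).1
            rcases lt_or_gt_of_ne hkj with h | h
            · rw [hIlt k h, mul_zero, if_neg (not_lt.mpr h.le)]
            · rw [hIgt k h, if_pos h]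
              have hb := (hIoik k).1
              have hGk := hGpos (k:ℕ)
              nlinarith [mul_nonneg (mul_nonneg hGk.le (mul_pos hpow hχ0).le)
                (by linarith : (0:ℝ) ≤ F k k false + F k k true + χ)]
          refine le_trans (le_of_eq ?_) (Finset.sum_le_sum h2)
          rw [← Finset.sum_filter]
          have hset : ((Finset.univ.filter (fun k : Fin n => (k:ℕ) < m)).erase j).filter
              (fun k => j < k)
              = Finset.univ.filter (fun k : Fin n => (k:ℕ) < m ∧ j < k) := by
            ext k
            simp only [Finset.mem_filter, Finset.mem_erase, Finset.mem_univ, true_and]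
            constructor
            · rintro ⟨⟨h1, h2⟩, h3⟩; exact ⟨h2, h3⟩
            · rintro ⟨h1, h2⟩; exact ⟨⟨ne_of_gt h2, h1⟩, h2⟩
          rw [hset, Finset.mul_sum]
          refine Finset.sum_congr rfl fun k _ => ?_
          ring
        have h4 := hGsum j hjm
        have hGj := hGpos (j:ℕ)
        have hpowle : (1-χ)^(m-1) ≤ (1-χ)^(j:ℕ) :=
          pow_le_pow_of_le_one h1χ0.le (by linarith) (by omega)
        have hB : -((1-χ)^(j:ℕ) * χ) * (β * G (j:ℕ)) ≤ -(χ * χ * (1-χ)^(j:ℕ)) *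
            (∑ k ∈ Finset.univ.filter (fun k : Fin n => (k:ℕ) < m ∧ j < k), G (k:ℕ)) := by
          nlinarith [mul_le_mul_of_nonneg_left h4 (mul_pos hχ0 hpow).le]
        have hmain2 : χ * (1-χ)^(m-1) * (1-β) * G (j:ℕ)
            ≤ G (j:ℕ) * Ifun j + -((1-χ)^(j:ℕ) * χ) * (β * G (j:ℕ)) := by
          rw [hIeq]
          nlinarith [mul_le_mul_of_nonneg_right hpowle
            (mul_nonneg (mul_nonneg hχ0.le (show (0:ℝ) ≤ 1 - β by linarith)) (hGpos (j:ℕ)).le)]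
        calc χ * (1-χ)^(m-1) * (1-β) * G (j:ℕ)
            ≤ G (j:ℕ) * Ifun j + -((1-χ)^(j:ℕ) * χ) * (β * G (j:ℕ)) := hmain2
          _ ≤ G (j:ℕ) * Ifun j + -(χ * χ * (1-χ)^(j:ℕ)) *
              (∑ k ∈ Finset.univ.filter (fun k : Fin n => (k:ℕ) < m ∧ j < k), G (k:ℕ)) := by
              linarith [hB]
          _ ≤ G (j:ℕ) * Ifun j + ∑ k ∈ (Finset.univ.filter
              (fun k : Fin n => (k:ℕ) < m)).erase j, G (k:ℕ) * Ifun k := by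
              linarith [herase]

  calc χ * (1 - χ) ^ (m - 1) * (1 - β) * g x
      = ∑ j : Fin n, (if ((j:ℕ) < m ∧ x j = false) then
          χ * (1-χ)^(m-1) * (1-β) * G (j:ℕ) else 0) := by
        have hgx : g x = ∑ j : Fin n, (if ((j:ℕ) < m ∧ x j = false) then G (j:ℕ) else 0) := by
          rw [hg x, Finset.sum_filter]
          refine Finset.sum_congr rfl fun i _ => ?_
          by_cases h1 : (i:ℕ) < m <;> cases h2 : x i <;> simp [h1, h2]
        rw [hgx, Finset.mul_sum]
        refine Finset.sum_congr rfl fun j _ => ?_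
        by_cases h : ((j:ℕ) < m ∧ x j = false) <;> simp [h]
    _ ≤ _ := Finset.sum_le_sum fun j _ => hmain j

/-- One-step multiplicative drift of the exponentially weighted potential
`g x = ∑_{i=1}^{2^r} g_i (1 - x_i)` with
`g_i = (1 + α·d·χ_opt/(1 − d·χ_opt)^{2^r − 1})^{2^r − i}` and `χ_opt = 1/2^r`,
for the (1+1) EA on BinVal with any mutation rate `0 < χ ≤ d·χ_opt`:
`E[g x − g x'] ≥ χ·(1 − χ)^{2^r − 1}·(1 − 1/α)·g x`, the expectation being over
the random mutation. -/
theorem one_step_drift_exponential_weights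
    (n r : ℕ) (hrn : 2 ^ r ≤ n) (d : ℝ) (hd : 1 < d) (hd2 : d / 2 ^ r < 1)
    (α : ℝ) (hα : 2 < α)
    (χ : ℝ) (hχ0 : 0 < χ) (hχd : χ ≤ d * (1 / 2 ^ r))
    (g : (Fin n → Bool) → ℝ)
    (hg : ∀ x, g x = ∑ i ∈ Finset.univ.filter (fun i : Fin n => (i : ℕ) < 2 ^ r),
      (1 + (α * d * (1 / 2 ^ r)) / (1 - d * (1 / 2 ^ r)) ^ (2 ^ r - 1)) ^
          (2 ^ r - ((i : ℕ) + 1)) *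
        (if x i then 0 else 1))
    (x : Fin n → Bool) :
    χ * (1 - χ) ^ (2 ^ r - 1) * (1 - 1 / α) * g x ≤
      ∑ y : Fin n → Bool, flipProb n χ x y * (g x - g (select n x y)) := by
  classical
  have h2r : (0:ℝ) < 2 ^ r := by positivity
  have hd0 : (0:ℝ) < d := lt_trans one_pos hd
  have hα0 : (0:ℝ) < α := by linarith
  have hκ0 : (0:ℝ) < d * (1 / 2 ^ r) := by positivity
  have hκ1 : d * (1 / 2 ^ r) < 1 := by rw [mul_one_div]; exact hd2
  have h1κ : (0:ℝ) < 1 - d * (1 / 2 ^ r) := by linarith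
  set c : ℝ := α * d * (1 / 2 ^ r) / (1 - d * (1 / 2 ^ r)) ^ (2 ^ r - 1) with hc
  have hP0 : (0:ℝ) < (1 - d * (1 / 2 ^ r)) ^ (2 ^ r - 1) := pow_pos h1κ _
  have hP1 : (1 - d * (1 / 2 ^ r)) ^ (2 ^ r - 1) ≤ 1 := pow_le_one₀ h1κ.le (by linarith)
  have hc0 : (0:ℝ) < c := by
    rw [hc]
    exact div_pos (by positivity) hP0
  have h1c : (0:ℝ) < 1 + c := by linarith
  have hχ1 : χ < 1 := lt_of_le_of_lt hχd hκ1
  have hβ1 : 1 / α ≤ 1 := by rw [div_le_one hα0]; linarith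
  have hGpos : ∀ k : ℕ, (0:ℝ) < (1 + c) ^ (2 ^ r - (k + 1)) := fun k => pow_pos h1c _
  -- the geometric-sum hypothesis
  have hαχ : α * χ ≤ c := by
    rw [hc, le_div_iff₀ hP0]
    have h2 : α * χ * (1 - d * (1 / 2 ^ r)) ^ (2 ^ r - 1) ≤ α * (d * (1 / 2 ^ r)) * 1 := by
      nlinarith [mul_le_mul_of_nonneg_left hP1 (mul_nonneg hα0.le hχ0.le),
        mul_le_mul_of_nonneg_left hχd hα0.le]
    calc α * χ * (1 - d * (1 / 2 ^ r)) ^ (2 ^ r - 1) ≤ α * (d * (1 / 2 ^ r)) * 1 := h2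
      _ = α * d * (1 / 2 ^ r) := by ring
  have hGsum : ∀ j : Fin n, (j : ℕ) < 2 ^ r →
      χ * (∑ k ∈ Finset.univ.filter (fun k : Fin n => (k : ℕ) < 2 ^ r ∧ j < k),
          (1 + c) ^ (2 ^ r - ((k:ℕ) + 1)))
        ≤ (1 / α) * (1 + c) ^ (2 ^ r - ((j:ℕ) + 1)) := by
    intro j hjm
    set N : ℕ := 2 ^ r - ((j:ℕ) + 1) with hN
    have hgeo : (∑ k ∈ Finset.univ.filter (fun k : Fin n => (k : ℕ) < 2 ^ r ∧ j < k),
        (1 + c) ^ (2 ^ r - ((k:ℕ) + 1))) ≤ (1 + c) ^ N / c := by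
      have himg : ∑ k ∈ Finset.univ.filter (fun k : Fin n => (k : ℕ) < 2 ^ r ∧ j < k),
          (1 + c) ^ (2 ^ r - ((k:ℕ) + 1))
          = ∑ e ∈ (Finset.univ.filter (fun k : Fin n => (k : ℕ) < 2 ^ r ∧ j < k)).image
              (fun k : Fin n => 2 ^ r - ((k:ℕ) + 1)), (1 + c) ^ e := by
        rw [Finset.sum_image]
        intro a ha b hb hab
        simp only [Finset.mem_coe, Finset.mem_filter] at ha hb hab
        have : (a:ℕ) = (b:ℕ) := by omega
        exact Fin.ext this
      have hsub : (Finset.univ.filter (fun k : Fin n => (k : ℕ) < 2 ^ r ∧ j < k)).image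
          (fun k : Fin n => 2 ^ r - ((k:ℕ) + 1)) ⊆ Finset.range N := by
        intro e he
        simp only [Finset.mem_image, Finset.mem_filter] at he
        obtain ⟨k, ⟨⟨-, hk1, hk2⟩, rfl⟩⟩ := he
        have hk3 : (j:ℕ) < (k:ℕ) := hk2
        simp only [Finset.mem_range, hN]
        omega
      have hle : ∑ e ∈ (Finset.univ.filter (fun k : Fin n => (k : ℕ) < 2 ^ r ∧ j < k)).image
          (fun k : Fin n => 2 ^ r - ((k:ℕ) + 1)), (1 + c) ^ e
          ≤ ∑ e ∈ Finset.range N, (1 + c) ^ e :=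
        Finset.sum_le_sum_of_subset_of_nonneg hsub (fun e _ _ => (pow_pos h1c e).le)
      have hval : ∑ e ∈ Finset.range N, (1 + c) ^ e = ((1 + c) ^ N - 1) / c := by
        rw [geom_sum_eq (ne_of_gt (by linarith : (1:ℝ) < 1 + c)) N]
        congr 1
        ring
      have hlast : ((1 + c) ^ N - 1) / c ≤ (1 + c) ^ N / c :=
        (div_le_div_iff_of_pos_right hc0).mpr (by linarith)
      rw [himg]
      calc _ ≤ ∑ e ∈ Finset.range N, (1 + c) ^ e := hle
        _ = ((1 + c) ^ N - 1) / c := hval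
        _ ≤ (1 + c) ^ N / c := hlast
    have hdiv : χ / c ≤ 1 / α := by
      rw [div_le_div_iff₀ hc0 hα0]
      linarith
    calc χ * (∑ k ∈ Finset.univ.filter (fun k : Fin n => (k : ℕ) < 2 ^ r ∧ j < k),
          (1 + c) ^ (2 ^ r - ((k:ℕ) + 1)))
        ≤ χ * ((1 + c) ^ N / c) := mul_le_mul_of_nonneg_left hgeo hχ0.le
      _ = (1 + c) ^ N * (χ / c) := by ring
      _ ≤ (1 + c) ^ N * (1 / α) := mul_le_mul_of_nonneg_left hdiv (pow_pos h1c N).le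
      _ = (1 / α) * (1 + c) ^ N := by ring
  exact core_drift x χ hχ0 hχ1 (fun k : ℕ => (1 + c) ^ (2 ^ r - (k + 1))) hGpos
    (1 / α) hβ1 g hg hGsum

end
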